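/- Let A be an element of a commutative ring R. For any integer n ≥ 2, det[u_{|j−k|}(A,1)]_{1≤j,k≤n} = (−1)^{n−1}·2^{n−2}·u_{n−1}(A,1). -/

import Mathlib

def lucasU {R : Type*} [CommRing R] (x y : R) : ℕ → R
  | 0 => 0
  | 1 => 1
  | n + 2 => x * lucasU x y (n + 1) - y * lucasU x y n

def lucasV {R : Type*} [CommRing R] (x y : R) : ℕ → R
  | 0 => 2
  | 1 => x
  | n + 2 => x * lucasV x y (n + 1) - y * lucasV x y n

namespace LucasDetAux

variable {R : Type*} [CommRing R] (A : R)

lemma urec (d : ℕ) : lucasU A 1 (d + 2) = A * lucasU A 1 (d + 1) - lucasU A 1 d := by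
  simp [lucasU]

/-- shifted indicator matrix -/
def S (R : Type*) [CommRing R] (n p c : ℕ) : Matrix (Fin n) (Fin n) R :=
  Matrix.of fun j l => if (j : ℕ) = (l : ℕ) + p ∧ c ≤ (l : ℕ) then (1 : R) else 0

lemma S_mul_pos {n : ℕ} (p c : ℕ) (W : Matrix (Fin n) (Fin n) R) (j k l0 : Fin n)
    (h1 : (l0 : ℕ) + p = (j : ℕ)) (h2 : c ≤ (l0 : ℕ)) :
    (S R n p c * W) j k = W l0 k := by
  rw [Matrix.mul_apply]
  rw [Finset.sum_eq_single l0]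
  · simp [S, h1.symm, h2]
  · intro b _ hb
    have : ¬((j : ℕ) = (b : ℕ) + p ∧ c ≤ (b : ℕ)) := by
      rintro ⟨hj, -⟩
      exact hb (Fin.ext (by omega))
    simp [S, this]
  · intro h; exact absurd (Finset.mem_univ l0) h

lemma S_mul_neg {n : ℕ} (p c : ℕ) (W : Matrix (Fin n) (Fin n) R) (j k : Fin n)
    (h : (j : ℕ) < p + c) :
    (S R n p c * W) j k = 0 := by
  rw [Matrix.mul_apply]
  apply Finset.sum_eq_zero
  intro l _
  have : ¬((j : ℕ) = (l : ℕ) + p ∧ c ≤ (l : ℕ)) := by rintro ⟨h1, h2⟩; omega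
  simp [S, this]

/-- the row-operation matrix -/
def E (n : ℕ) : Matrix (Fin n) (Fin n) R := 1 + (-A) • S R n 1 1 + S R n 2 0

/-- the original matrix -/
def M (n : ℕ) : Matrix (Fin n) (Fin n) R :=
  Matrix.of fun j k : Fin n => lucasU A 1 ((j : ℤ) - (k : ℤ)).natAbs

/-- the reduced matrix -/
def N (n : ℕ) : Matrix (Fin n) (Fin n) R :=
  Matrix.of fun j k : Fin n =>
    if (j : ℕ) = 0 then lucasU A 1 (k : ℕ)
    else if (j : ℕ) = 1 then lucasU A 1 ((1 : ℤ) - (k : ℕ)).natAbs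
    else if (k : ℕ) + 1 = (j : ℕ) then 2 else 0

lemma det_E (n : ℕ) : (E A n).det = 1 := by
  have h : (E A n).BlockTriangular OrderDual.toDual := by
    intro i j hij
    have hij' : (i : ℕ) < (j : ℕ) := hij
    have h1 : ¬((i : ℕ) = (j : ℕ) + 1 ∧ 1 ≤ (j : ℕ)) := by omega
    have h2 : ¬((i : ℕ) = (j : ℕ) + 2 ∧ 0 ≤ (j : ℕ)) := by omega
    have hne : i ≠ j := by exact fun h => by simp [h] at hij'
    simp only [E, S, Matrix.add_apply, Matrix.smul_apply, Matrix.one_apply, Matrix.of_apply,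
      if_neg hne, if_neg h1, if_neg h2, smul_zero, add_zero, zero_add]
  rw [Matrix.det_of_lowerTriangular _ h]
  apply Finset.prod_eq_one
  intro i _
  have h1 : ¬((i : ℕ) = (i : ℕ) + 1 ∧ 1 ≤ (i : ℕ)) := by omega
  have h2 : ¬((i : ℕ) = (i : ℕ) + 2 ∧ 0 ≤ (i : ℕ)) := by omega
  simp only [E, S, Matrix.add_apply, Matrix.smul_apply, Matrix.one_apply, Matrix.of_apply,
    if_pos rfl, if_neg h1, if_neg h2, smul_zero, add_zero]
  simp

lemma EM_eq_N (m : ℕ) : E A (m + 2) * M A (m + 2) = N A (m + 2) := by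
  ext j k
  have hEM : (E A (m + 2) * M A (m + 2)) j k
      = M A (m + 2) j k + (-A) * (S R (m + 2) 1 1 * M A (m + 2)) j k
        + (S R (m + 2) 2 0 * M A (m + 2)) j k := by
    simp [E, Matrix.add_mul, Matrix.smul_mul, Matrix.add_apply, Matrix.smul_apply, smul_eq_mul]
  rw [hEM]
  rcases Nat.lt_or_ge (j : ℕ) 2 with hj | hj
  · rw [S_mul_neg _ _ _ _ _ (by omega), S_mul_neg _ _ _ _ _ (by omega)]
    rcases Nat.lt_or_ge (j : ℕ) 1 with h0 | h1
    · have hj0 : (j : ℕ) = 0 := by omega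
      have habs : ((j : ℤ) - (k : ℤ)).natAbs = (k : ℕ) := by omega
      simp [M, N, hj0, habs, show j = 0 from Fin.ext hj0]
    · have hj1 : (j : ℕ) = 1 := by omega
      have habs : ((j : ℤ) - (k : ℤ)).natAbs = ((1 : ℤ) - ((k : ℕ) : ℤ)).natAbs := by omega
      simp [M, N, hj1, habs, show ¬ j = 0 from fun h => by simp [h] at hj1]
  · have hl1 : (j : ℕ) - 1 < m + 2 := by omega
    have hl2 : (j : ℕ) - 2 < m + 2 := by omega
    rw [S_mul_pos _ _ _ _ _ ⟨(j : ℕ) - 1, hl1⟩ (by simp; omega) (by simp; omega),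
        S_mul_pos _ _ _ _ _ ⟨(j : ℕ) - 2, hl2⟩ (by simp; omega) (by simp)]
    have hN : N A (m + 2) j k = if (k : ℕ) + 1 = (j : ℕ) then 2 else 0 := by
      simp only [N, Matrix.of_apply]
      rw [if_neg (by omega), if_neg (by omega)]
    rw [hN]
    simp only [M, Matrix.of_apply]
    rcases Nat.lt_or_ge (k : ℕ) ((j : ℕ) - 1) with hk | hk
    · -- k ≤ j - 2
      set d : ℕ := (j : ℕ) - 2 - (k : ℕ) with hd
      rw [show ((j : ℤ) - (k : ℤ)).natAbs = d + 2 by omega,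
          show (((⟨(j : ℕ) - 1, hl1⟩ : Fin (m + 2)) : ℤ) - (k : ℤ)).natAbs = d + 1 by
            simp only [Fin.val_mk]; omega,
          show (((⟨(j : ℕ) - 2, hl2⟩ : Fin (m + 2)) : ℤ) - (k : ℤ)).natAbs = d by
            simp only [Fin.val_mk]; omega,
          if_neg (by omega), urec A d]
      ring
    rcases Nat.lt_or_ge (k : ℕ) (j : ℕ) with hk2 | hk2
    · -- k = j - 1
      rw [show ((j : ℤ) - (k : ℤ)).natAbs = 1 by omega,
          show (((⟨(j : ℕ) - 1, hl1⟩ : Fin (m + 2)) : ℤ) - (k : ℤ)).natAbs = 0 by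
            simp only [Fin.val_mk]; omega,
          show (((⟨(j : ℕ) - 2, hl2⟩ : Fin (m + 2)) : ℤ) - (k : ℤ)).natAbs = 1 by
            simp only [Fin.val_mk]; omega,
          if_pos (by omega)]
      show lucasU A 1 1 + -A * lucasU A 1 0 + lucasU A 1 1 = 2
      simp [lucasU]; ring
    rcases Nat.lt_or_ge (k : ℕ) ((j : ℕ) + 1) with hk3 | hk3
    · -- k = j
      rw [show ((j : ℤ) - (k : ℤ)).natAbs = 0 by omega,
          show (((⟨(j : ℕ) - 1, hl1⟩ : Fin (m + 2)) : ℤ) - (k : ℤ)).natAbs = 1 by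
            simp only [Fin.val_mk]; omega,
          show (((⟨(j : ℕ) - 2, hl2⟩ : Fin (m + 2)) : ℤ) - (k : ℤ)).natAbs = 2 by
            simp only [Fin.val_mk]; omega,
          if_neg (by omega)]
      show lucasU A 1 0 + -A * lucasU A 1 1 + lucasU A 1 2 = 0
      simp [lucasU]
    · -- k ≥ j + 1
      set e : ℕ := (k : ℕ) - (j : ℕ) with he
      rw [show ((j : ℤ) - (k : ℤ)).natAbs = e by omega,
          show (((⟨(j : ℕ) - 1, hl1⟩ : Fin (m + 2)) : ℤ) - (k : ℤ)).natAbs = e + 1 by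
            simp only [Fin.val_mk]; omega,
          show (((⟨(j : ℕ) - 2, hl2⟩ : Fin (m + 2)) : ℤ) - (k : ℤ)).natAbs = e + 2 by
            simp only [Fin.val_mk]; omega,
          if_neg (by omega), urec A e]
      ring

lemma hval (m : ℕ) (i : Fin (m + 2)) :
    (finRotate (m + 2) i : ℕ) = if (i : ℕ) = m + 1 then 0 else (i : ℕ) + 1 := by
  rw [finRotate_succ_apply, Fin.val_add_one]
  by_cases h : i = Fin.last (m + 1)
  · rw [if_pos h, if_pos (by rw [h]; rfl)]
  · rw [if_neg h, if_neg (by intro hv; exact h (Fin.ext (by simpa using hv)))]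

lemma det_N (m : ℕ) : (N A (m + 2)).det = (-1) ^ (m + 1) * 2 ^ m * lucasU A 1 (m + 1) := by
  rw [Matrix.det_apply']
  rw [Finset.sum_eq_single (finRotate (m + 2))]
  · have hfac : ∀ i : Fin (m + 2), N A (m + 2) (finRotate (m + 2) i) i =
        if (i : ℕ) = 0 then 1 else if (i : ℕ) = m + 1 then lucasU A 1 (m + 1) else (2 : R) := by
      intro i
      have hv := hval m i
      simp only [N, Matrix.of_apply]
      by_cases h1 : (i : ℕ) = m + 1
      · rw [if_pos (by rw [hv, if_pos h1]), if_neg (by omega), if_pos h1, h1]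
      · rw [if_neg (by rw [hv, if_neg h1]; omega)]
        by_cases h0 : (i : ℕ) = 0
        · rw [if_pos (by rw [hv, if_neg h1]; omega), if_pos h0,
            show ((1 : ℤ) - ((i : ℕ) : ℤ)).natAbs = 1 by omega]
          norm_num [lucasU]
        · rw [if_neg (by rw [hv, if_neg h1]; omega), if_pos (by rw [hv, if_neg h1]),
            if_neg h0, if_neg h1]
    rw [Finset.prod_congr rfl (fun i _ => hfac i)]
    rw [Fin.prod_univ_succ, Fin.prod_univ_castSucc]
    have e0 : (((0 : Fin (m + 2)) : ℕ)) = 0 := rfl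
    rw [if_pos e0]
    have elast : (((Fin.last m).succ : Fin (m + 2)) : ℕ) = m + 1 := by simp
    rw [if_neg (by omega), if_pos (by omega : (((Fin.last m).succ : Fin (m+2)) : ℕ) = m + 1)]
    have hmid : ∀ i : Fin m,
        (if (((i.castSucc).succ : Fin (m + 2)) : ℕ) = 0 then (1 : R)
         else if (((i.castSucc).succ : Fin (m + 2)) : ℕ) = m + 1 then lucasU A 1 (m + 1)
         else 2) = 2 := by
      intro i
      have h1 : (((i.castSucc).succ : Fin (m + 2)) : ℕ) = (i : ℕ) + 1 := by simp
      have h2 : (i : ℕ) < m := i.isLt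
      rw [if_neg (by omega), if_neg (by omega)]
    rw [Finset.prod_congr rfl (fun i _ => hmid i), Finset.prod_const]
    have hsign : (Equiv.Perm.sign (finRotate (m + 2)) : ℤ) = (-1) ^ (m + 1) := by
      rw [sign_finRotate]; simp
    rw [hsign]
    simp [Finset.card_univ]
    ring
  · intro σ _ hσ
    by_cases hA : ∀ i : Fin (m + 2), 2 ≤ (σ i : ℕ) → (σ i : ℕ) = (i : ℕ) + 1
    · -- chain case: either σ 0 = 0 (zero factor) or σ = finRotate (contradiction)
      by_cases h0 : (σ 0 : ℕ) = 0
      · apply mul_eq_zero_of_right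
        apply Finset.prod_eq_zero (Finset.mem_univ (0 : Fin (m + 2)))
        simp only [N, Matrix.of_apply, if_pos h0]
        norm_num [lucasU]
      · exfalso
        apply hσ
        have hσ0 : (σ 0 : ℕ) = 1 := by
          by_contra h1
          have h2 : 2 ≤ (σ 0 : ℕ) := by omega
          have := hA 0 h2
          simp at this
          omega
        have hmid2 : ∀ i : Fin (m + 2), 1 ≤ (i : ℕ) → (i : ℕ) ≤ m → (σ i : ℕ) = (i : ℕ) + 1 := by
          intro i hi1 hi2
          obtain ⟨t, ht⟩ := σ.surjective ⟨(i : ℕ) + 1, by omega⟩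
          have h2' : 2 ≤ (σ t : ℕ) := by rw [ht]; simpa using by omega
          have h3 := hA t h2'
          have hti : t = i := by
            apply Fin.ext
            have : (σ t : ℕ) = (i : ℕ) + 1 := by rw [ht]
            omega
          rw [← hti, h3, hti]
        have hlast : (σ (Fin.last (m + 1)) : ℕ) = 0 := by
          by_contra hl
          rcases Nat.lt_or_ge (σ (Fin.last (m + 1)) : ℕ) 2 with h | h
          · have hv1 : (σ (Fin.last (m + 1)) : ℕ) = 1 := by omega
            have : σ (Fin.last (m + 1)) = σ 0 := Fin.ext (by omega)
            have h00 := σ.injective this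
            have : (Fin.last (m + 1) : ℕ) = ((0 : Fin (m + 2)) : ℕ) := by rw [h00]
            simp at this
          · have h4 := hA _ h
            have h5 : (σ (Fin.last (m + 1)) : ℕ) < m + 2 := (σ _).isLt
            have h6 : ((Fin.last (m + 1) : Fin (m + 2)) : ℕ) = m + 1 := rfl
            omega
        ext i
        rw [hval m i]
        by_cases hil : (i : ℕ) = m + 1
        · rw [if_pos hil]
          have hh : i = Fin.last (m + 1) := Fin.ext (by simpa using hil)
          rw [hh]
          exact hlast
        · rw [if_neg hil]
          by_cases hi0 : (i : ℕ) = 0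
          · have hh : i = 0 := Fin.ext (by simpa using hi0)
            rw [hh, hσ0]; simp
          · exact hmid2 i (by omega) (by omega)
    · push_neg at hA
      obtain ⟨i, h2, hne⟩ := hA
      apply mul_eq_zero_of_right
      apply Finset.prod_eq_zero (Finset.mem_univ i)
      simp only [N, Matrix.of_apply]
      rw [if_neg (by omega), if_neg (by omega), if_neg (by omega)]
  · intro h
    exact absurd (Finset.mem_univ _) h

lemma det_main (m : ℕ) :
    (M A (m + 2)).det = (-1) ^ (m + 1) * 2 ^ m * lucasU A 1 (m + 1) := by
  have h1 : (M A (m + 2)).det = (N A (m + 2)).det := by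
    rw [← EM_eq_N, Matrix.det_mul, det_E, one_mul]
  rw [h1, det_N]

end LucasDetAux

theorem stmt_4 {R : Type*} [CommRing R] (A : R) (n : ℕ) (hn : 2 ≤ n) :
    Matrix.det (Matrix.of fun j k : Fin n => lucasU A 1 ((j : ℤ) - (k : ℤ)).natAbs) =
      (-1) ^ (n - 1) * 2 ^ (n - 2) * lucasU A 1 (n - 1) := by
  obtain ⟨m, rfl⟩ : ∃ m, n = m + 2 := ⟨n - 2, by omega⟩
  have h := LucasDetAux.det_main A m
  simpa [LucasDetAux.M] using h
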